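/- Let G be a finite group, S a Sylow p-subgroup of G, and x, y ∈ S. Then x and y are conjugate in G if and only if the images of x and y in G/O_{p'}(G) are conjugate in G/O_{p'}(G). -/
import Mathlib

open Subgroup

private lemma stmt11_aux {G : Type*} [Group G] [Finite G] {p : ℕ} [hp : Fact p.Prime]
    (N : Subgroup G) [N.Normal] (hNp : (Nat.card N).Coprime p)
    {y z : G} (hy : ∃ k, orderOf y = p ^ k) (hz : ∃ k, orderOf z = p ^ k)
    (hq : (QuotientGroup.mk' N) z = (QuotientGroup.mk' N) y) :
    IsConj z y := by
  obtain ⟨k, hyk⟩ := hy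
  obtain ⟨l, hzl⟩ := hz
  set φ := QuotientGroup.mk' N with hφ
  -- any element of N with p-power order is trivial
  have hker : ∀ a : G, (∃ j, orderOf a = p ^ j) → a ∈ N → a = 1 := by
    rintro a ⟨j, hj⟩ ha
    have h1 : orderOf a ∣ Nat.card N := Subgroup.orderOf_dvd_natCard N ha
    have h2 : (Nat.card N).Coprime (p ^ j) := hNp.pow_right j
    have : orderOf a ∣ 1 := by
      have := Nat.dvd_gcd h1 (dvd_of_eq hj)
      rwa [Nat.Coprime.gcd_eq_one h2] at this
    exact orderOf_eq_one_iff.mp (Nat.dvd_one.mp this)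
  -- φ preserves orders of p-power-order elements
  have horder : ∀ a : G, (∃ j, orderOf a = p ^ j) → orderOf (φ a) = orderOf a := by
    rintro a ha
    refine Nat.dvd_antisymm (orderOf_map_dvd φ a) ?_
    have h1 : φ (a ^ orderOf (φ a)) = 1 := by rw [map_pow, pow_orderOf_eq_one]
    have h2 : a ^ orderOf (φ a) ∈ N := (QuotientGroup.eq_one_iff _).mp h1
    have h3 : orderOf (a ^ orderOf (φ a)) ∣ orderOf a := orderOf_pow_dvd _
    obtain ⟨j, hj⟩ := ha
    obtain ⟨i, _, hi⟩ := (Nat.dvd_prime_pow hp.out).mp (hj ▸ h3)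
    have := hker _ ⟨i, hi⟩ h2
    exact orderOf_dvd_of_pow_eq_one this
  -- the subgroup H = ⟨y⟩ N
  set H : Subgroup G := zpowers y ⊔ N with hH
  have hyH : y ∈ H := Subgroup.mem_sup_left (mem_zpowers y)
  have hn : y⁻¹ * z ∈ N := by
    have : z⁻¹ * y ∈ N := QuotientGroup.eq.mp hq
    simpa using inv_mem this
  have hzH : z ∈ H := by
    have : y * (y⁻¹ * z) ∈ H := mul_mem hyH (Subgroup.mem_sup_right hn)
    simpa using this
  -- φ maps H into zpowers (φ y)
  have hHmap : ∀ g : G, g ∈ H → φ g ∈ zpowers (φ y) := by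
    intro g hg
    have : φ g ∈ H.map φ := Subgroup.mem_map_of_mem φ hg
    rw [hH, Subgroup.map_sup, MonoidHom.map_zpowers] at this
    have hNbot : N.map φ ≤ zpowers (φ y) := by
      rintro u ⟨v, hv, rfl⟩
      have : φ v = 1 := (QuotientGroup.eq_one_iff _).mpr hv
      rw [this]; exact one_mem _
    exact (sup_le le_rfl hNbot) this
  -- orderOf z = orderOf y
  have hzy : orderOf z = orderOf y := by
    rw [← horder z ⟨l, hzl⟩, ← horder y ⟨k, hyk⟩, hq]
  -- any p-subgroup of H has card at most orderOf y
  have hbound : ∀ P : Subgroup ↥H, IsPGroup p P → Nat.card P ≤ orderOf y := by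
    intro P hP
    have horderP : ∀ u : ↥P, ∃ j, orderOf ((u : ↥H) : G) = p ^ j := by
      intro u
      obtain ⟨j, hj⟩ := hP u
      have : orderOf u ∣ p ^ j := orderOf_dvd_of_pow_eq_one hj
      obtain ⟨i, _, hi⟩ := (Nat.dvd_prime_pow hp.out).mp this
      exact ⟨i, by rw [Subgroup.orderOf_coe, Subgroup.orderOf_coe, hi]⟩
    set f : ↥P → ↥(zpowers (φ y)) :=
      fun u => ⟨φ ((u : ↥H) : G), hHmap _ (u : ↥H).2⟩ with hf
    have hinj : Function.Injective f := by
      intro u v huv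
      have h1 : φ (((u : ↥H) : G) * ((v : ↥H) : G)⁻¹) = 1 := by
        have := Subtype.ext_iff.mp huv
        simp only [hf] at this
        rw [map_mul, map_inv, this, mul_inv_cancel]
      have h2 : ((u : ↥H) : G) * ((v : ↥H) : G)⁻¹ ∈ N := (QuotientGroup.eq_one_iff _).mp h1
      have h3 : (((u * v⁻¹ : ↥P) : ↥H) : G) = ((u : ↥H) : G) * ((v : ↥H) : G)⁻¹ := by
        push_cast; ring_nf
      have h4 := hker _ (h3 ▸ horderP (u * v⁻¹)) (h3 ▸ h2)
      have : (u * v⁻¹ : ↥P) = 1 := by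
        apply Subtype.ext; apply Subtype.ext
        simpa using h3.symm ▸ h4
      have := mul_inv_eq_one.mp this
      exact this
    calc Nat.card P ≤ Nat.card (zpowers (φ y)) := Nat.card_le_card_of_injective f hinj
      _ = orderOf (φ y) := Nat.card_zpowers _
      _ = orderOf y := horder y ⟨k, hyk⟩
  -- y and z as elements of H
  set y' : ↥H := ⟨y, hyH⟩ with hy'
  set z' : ↥H := ⟨z, hzH⟩ with hz'
  have hcy : Nat.card (zpowers y') = orderOf y := by
    rw [Nat.card_zpowers, Subgroup.orderOf_mk]
  have hcz : Nat.card (zpowers z') = orderOf y := by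
    rw [Nat.card_zpowers, Subgroup.orderOf_mk, hzy]
  have hpy : IsPGroup p (zpowers y') := IsPGroup.of_card (by rw [hcy, hyk])
  have hpz : IsPGroup p (zpowers z') := IsPGroup.of_card (by rw [hcz, ← hzy, hzl])
  obtain ⟨R, hR⟩ := hpy.exists_le_sylow
  obtain ⟨R', hR'⟩ := hpz.exists_le_sylow
  have hRy : zpowers y' = (R : Subgroup ↥H) :=
    Subgroup.eq_of_le_of_card_ge hR (hcy ▸ hbound R R.2)
  have hRz : zpowers z' = (R' : Subgroup ↥H) :=
    Subgroup.eq_of_le_of_card_ge hR' (hcz ▸ hbound R' R'.2)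
  obtain ⟨h, hh⟩ := MulAction.exists_smul_eq (↥H) R' R
  have hzR' : z' ∈ (R' : Subgroup ↥H) := hRz ▸ mem_zpowers z'
  have hconj : h * z' * h⁻¹ ∈ (R : Subgroup ↥H) := by
    rw [← hh, Sylow.coe_subgroup_smul]
    have := Subgroup.smul_mem_pointwise_smul z' (MulAut.conj h) (R' : Subgroup ↥H) hzR'
    simpa [MulAut.conj_apply] using this
  rw [← hRy] at hconj
  obtain ⟨m, hm⟩ := hconj
  -- push hm down to G and to the quotient
  have hmG : (y : G) ^ m = (h : G) * z * (h : G)⁻¹ := by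
    have := congrArg (fun u : ↥H => (u : G)) hm
    push_cast at this
    simpa using this
  have hφh : φ (h : G) ∈ zpowers (φ y) := hHmap _ h.2
  obtain ⟨t, ht⟩ := hφh
  have hφeq : φ y ^ m = φ y := by
    have := congrArg φ hmG
    rw [map_zpow, map_mul, map_mul, map_inv, hq, ← ht] at this
    rw [this]
    group
  have hym : y ^ m = y := by
    have h1 : φ (y ^ m * y⁻¹) = 1 := by
      rw [map_mul, map_inv, map_zpow, hφeq, mul_inv_cancel]
    have h2 : y ^ m * y⁻¹ ∈ N := (QuotientGroup.eq_one_iff _).mp h1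
    have h3 : y ^ m * y⁻¹ ∈ zpowers y := mul_mem (zpow_mem (mem_zpowers y) m) (inv_mem (mem_zpowers y))
    have h4 : orderOf (y ^ m * y⁻¹) ∣ p ^ k := by
      have := Subgroup.orderOf_dvd_natCard (zpowers y) h3
      rwa [Nat.card_zpowers, hyk] at this
    obtain ⟨i, _, hi⟩ := (Nat.dvd_prime_pow hp.out).mp h4
    have := hker _ ⟨i, hi⟩ h2
    exact mul_inv_eq_one.mp this
  rw [hym] at hmG
  exact isConj_iff.mpr ⟨(h : G), hmG.symm⟩

theorem stmt11 {G : Type*} [Group G] [Finite G] (p : ℕ) [Fact p.Prime]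
    (S : Sylow p G)
    -- `N = O_{p'}(G)`: the largest normal subgroup of order coprime to `p`
    (N : Subgroup G) [N.Normal] (hNp : (Nat.card N).Coprime p)
    (hNmax : ∀ M : Subgroup G, M.Normal → (Nat.card M).Coprime p → M ≤ N)
    (x y : G) (hx : x ∈ S) (hy : y ∈ S) :
    IsConj x y ↔ IsConj (QuotientGroup.mk' N x) (QuotientGroup.mk' N y) := by
  have hp : Fact p.Prime := inferInstance
  have hord : ∀ a : G, a ∈ S → ∃ k, orderOf a = p ^ k := by
    intro a ha
    obtain ⟨k, hk⟩ := S.2 ⟨a, ha⟩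
    have : orderOf (⟨a, ha⟩ : ↥(S : Subgroup G)) ∣ p ^ k := orderOf_dvd_of_pow_eq_one hk
    rw [Subgroup.orderOf_mk] at this
    obtain ⟨i, _, hi⟩ := (Nat.dvd_prime_pow hp.out).mp this
    exact ⟨i, hi⟩
  constructor
  · intro h
    obtain ⟨c, hc⟩ := isConj_iff.mp h
    exact isConj_iff.mpr ⟨QuotientGroup.mk' N c, by
      rw [← map_inv, ← map_mul, ← map_mul, hc]⟩
  · intro h
    obtain ⟨c, hc⟩ := isConj_iff.mp h
    obtain ⟨g, rfl⟩ := QuotientGroup.mk'_surjective N c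
    set z : G := g * x * g⁻¹ with hz
    have hφz : (QuotientGroup.mk' N) z = (QuotientGroup.mk' N) y := by
      rw [hz, map_mul, map_mul, map_inv]
      exact hc
    have hxz : IsConj x z := isConj_iff.mpr ⟨g, rfl⟩
    have hoz : ∃ k, orderOf z = p ^ k := by
      obtain ⟨k, hk⟩ := hord x hx
      have : orderOf z = orderOf x := by
        have := orderOf_injective (MulAut.conj g).toMonoidHom (MulAut.conj g).injective x
        simpa [MulAut.conj_apply, hz] using this
      exact ⟨k, this ▸ hk⟩
    exact hxz.trans (stmt11_aux N hNp (hord y hy) hoz hφz)
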